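/- Λ is invariant under the distributional transform: Λ(Y|X) = Λ( F_Y(Y) | (F_{X₁}(X₁), …, F_{X_p}(X_p)) ), where F_Z denotes the cumulative distribution function of the real random variable Z. -/

import Mathlib

open MeasureTheory ProbabilityTheory Set Filter Topology

/-- The (nonparametric) relative effect `Ψ(μ, ν) = ∫ μ((-∞,y)) + (1/2) μ({y}) dν(y)`. -/
noncomputable def relEffect (μ ν : Measure ℝ) : ℝ :=
  ∫ y, ((μ (Set.Iio y)).toReal + (1 / 2) * (μ {y}).toReal) ∂ν

/-- `α(μ) = 1 - ∫ μ({x}) dμ(x) = 1 - P(X = X*)`, the non-discrete mass of `μ`. -/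
noncomputable def alphaCoeff {E : Type*} [MeasurableSpace E] (μ : Measure E) : ℝ :=
  1 - ∫ x, (μ {x}).toReal ∂μ

/-- The coefficient of separation `Λ(Y|X)`. -/
noncomputable def sepCoeff {Ω E : Type*} [MeasurableSpace Ω] [MeasurableSpace E]
    (P : Measure Ω) [IsFiniteMeasure P] (Y : Ω → ℝ) (X : Ω → E) : ℝ :=
  (alphaCoeff (P.map X))⁻¹ *
    ∫ x : E × E,
      (relEffect (condDistrib Y X P x.1) (condDistrib Y X P x.2)
        - relEffect (condDistrib Y X P x.2) (condDistrib Y X P x.1)) ^ 2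
      ∂((P.map X).prod (P.map X))

/-- A random variable is non-degenerate if it is not a.s. constant. -/
def Nondegenerate {Ω α : Type*} [MeasurableSpace Ω] (P : Measure Ω) (Z : Ω → α) : Prop :=
  ¬ ∃ c, ∀ᵐ ω ∂P, Z ω = c

/-- The cumulative distribution function of a real random variable: `F_Z(z) = P(Z ≤ z)`. -/
noncomputable def rvCdf {Ω : Type*} [MeasurableSpace Ω] (P : Measure Ω) (Z : Ω → ℝ) : ℝ → ℝ :=
  fun z => (P {ω | Z ω ≤ z}).toReal

namespace SepAux

/-- cdf of a measure on ℝ. -/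
noncomputable def mcdf (ν : Measure ℝ) (z : ℝ) : ℝ := (ν (Set.Iic z)).toReal

lemma mcdf_mono (ν : Measure ℝ) [IsFiniteMeasure ν] : Monotone (mcdf ν) := fun a b hab =>
  ENNReal.toReal_mono (measure_ne_top _ _) (measure_mono (Set.Iic_subset_Iic.2 hab))

lemma mcdf_measurable (ν : Measure ℝ) [IsFiniteMeasure ν] : Measurable (mcdf ν) :=
  (mcdf_mono ν).measurable

/-- The set of points `z` admitting some `t < z` with `ν((t,z]) = 0`. -/
def badSet (ν : Measure ℝ) : Set ℝ := ⋃ q : ℚ, {z | (q : ℝ) < z ∧ ν (Set.Ioc (q : ℝ) z) = 0}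

lemma badSet_measurableSet (ν : Measure ℝ) : MeasurableSet (badSet ν) := by
  refine MeasurableSet.iUnion fun q => ?_
  have h2 : MeasurableSet {z : ℝ | ν (Set.Ioc (q : ℝ) z) = 0} := by
    apply Set.OrdConnected.measurableSet
    constructor
    intro a _ b hb c hc
    exact measure_mono_null (Set.Ioc_subset_Ioc le_rfl hc.2) hb
  exact measurableSet_Ioi.inter h2

lemma badSet_null (ν : Measure ℝ) : ν (badSet ν) = 0 := by
  refine measure_iUnion_null fun q => ?_
  set S : Set ℝ := {z | (q : ℝ) < z ∧ ν (Set.Ioc (q : ℝ) z) = 0} with hS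
  rcases Set.eq_empty_or_nonempty S with h | hne
  · simp [h]
  by_cases hbdd : BddAbove S
  · set s := sSup S with hs
    by_cases hmem : s ∈ S
    · have hsub : S ⊆ Set.Ioc (q : ℝ) s := fun z hz => ⟨hz.1, le_csSup hbdd hz⟩
      exact measure_mono_null hsub hmem.2
    · have hsub : S ⊆ ⋃ n : ℕ, Set.Ioc (q : ℝ) (s - 1 / (n + 1)) := by
        intro z hz
        have hzs : z < s := lt_of_le_of_ne (le_csSup hbdd hz) (fun h => hmem (h ▸ hz))
        obtain ⟨n, hn⟩ := exists_nat_one_div_lt (sub_pos.2 hzs)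
        exact Set.mem_iUnion.2 ⟨n, hz.1, by linarith⟩
      refine measure_mono_null hsub (measure_iUnion_null fun n => ?_)
      by_cases hlt : s - 1 / (n + 1) < s
      · obtain ⟨z', hz', hltz'⟩ := exists_lt_of_lt_csSup hne hlt
        exact measure_mono_null (Set.Ioc_subset_Ioc le_rfl hltz'.le) hz'.2
      · exfalso; apply hlt; have : (0:ℝ) < 1 / (n+1) := by positivity
        linarith
  · have hf : ∀ n : ℕ, ∃ w ∈ S, (n : ℝ) < w := fun n => (not_bddAbove_iff.1 hbdd) n
    choose f hfS hfgt using hf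
    have hsub : S ⊆ ⋃ n : ℕ, Set.Ioc (q : ℝ) (f n) := by
      intro z hz
      obtain ⟨n, hn⟩ := exists_nat_ge z
      exact Set.mem_iUnion.2 ⟨n, hz.1, hn.trans (hfgt n).le⟩
    exact measure_mono_null hsub (measure_iUnion_null fun n => (hfS n).2)

lemma mem_badSet_of_lt {ν : Measure ℝ} {z z' : ℝ} (h : z < z') (h0 : ν (Set.Ioc z z') = 0) :
    z' ∈ badSet ν := by
  obtain ⟨q, hq1, hq2⟩ := exists_rat_btwn h
  exact Set.mem_iUnion.2 ⟨q, hq2, measure_mono_null (Set.Ioc_subset_Ioc hq1.le le_rfl) h0⟩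

lemma mcdf_eq_iff {ν : Measure ℝ} [IsFiniteMeasure ν] {z z' : ℝ} (h : z ≤ z') :
    mcdf ν z = mcdf ν z' ↔ ν (Set.Ioc z z') = 0 := by
  have hsplit : ν (Set.Iic z') = ν (Set.Iic z) + ν (Set.Ioc z z') := by
    rw [← Set.Iic_union_Ioc_eq_Iic h, measure_union _ measurableSet_Ioc]
    exact Set.disjoint_left.2 fun a ha hb => absurd ha (not_le.2 hb.1)
  constructor
  · intro heq
    have : ν (Set.Iic z) = ν (Set.Iic z') :=
      (ENNReal.toReal_eq_toReal_iff' (measure_ne_top _ _) (measure_ne_top _ _)).1 heq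
    rw [this] at hsplit
    have h2 : ν (Set.Iic z') + ν (Set.Ioc z z') = ν (Set.Iic z') + 0 := by
      rw [add_zero]; exact hsplit.symm
    exact (ENNReal.add_right_inj (measure_ne_top _ _)).1 h2
  · intro h0
    unfold mcdf
    rw [hsplit, h0, add_zero]

lemma mcdf_inj {ν : Measure ℝ} [IsFiniteMeasure ν] {z z' : ℝ}
    (hz : z ∉ badSet ν) (hz' : z' ∉ badSet ν) (h : mcdf ν z = mcdf ν z') : z = z' := by
  rcases lt_trichotomy z z' with hlt | heq | hgt
  · exact absurd (mem_badSet_of_lt hlt ((mcdf_eq_iff hlt.le).1 h)) hz'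
  · exact heq
  · exact ((hz (mem_badSet_of_lt hgt ((mcdf_eq_iff hgt.le).1 h.symm)))).elim

lemma mcdf_preimage_Iio {ν : Measure ℝ} [IsFiniteMeasure ν] {y : ℝ} (hy : y ∉ badSet ν) :
    mcdf ν ⁻¹' Set.Iio (mcdf ν y) = Set.Iio y := by
  ext z
  simp only [Set.mem_preimage, Set.mem_Iio]
  constructor
  · intro h
    by_contra hzy
    exact absurd (mcdf_mono ν (not_lt.1 hzy)) (not_le.2 h)
  · intro hzy
    refine lt_of_le_of_ne (mcdf_mono ν hzy.le) fun heq => ?_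
    exact hy (mem_badSet_of_lt hzy ((mcdf_eq_iff hzy.le).1 heq))

lemma mcdf_preimage_singleton_subset {ν : Measure ℝ} [IsFiniteMeasure ν] {y : ℝ}
    (hy : y ∉ badSet ν) : mcdf ν ⁻¹' {mcdf ν y} ⊆ {y} ∪ badSet ν := by
  intro z hz
  simp only [Set.mem_preimage, Set.mem_singleton_iff] at hz
  rcases lt_trichotomy z y with hlt | heq | hgt
  · exact ((hy (mem_badSet_of_lt hlt ((mcdf_eq_iff hlt.le).1 hz)))).elim
  · exact Or.inl heq
  · exact Or.inr (mem_badSet_of_lt hgt ((mcdf_eq_iff hgt.le).1 hz.symm))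

/-! Measurability helpers -/

lemma measurable_toReal_Iio (ν : Measure ℝ) [IsFiniteMeasure ν] :
    Measurable fun y => (ν (Set.Iio y)).toReal :=
  Monotone.measurable fun a b hab =>
    ENNReal.toReal_mono (measure_ne_top _ _) (measure_mono (Set.Iio_subset_Iio hab))

lemma toReal_singleton_eq (ν : Measure ℝ) [IsFiniteMeasure ν] (y : ℝ) :
    (ν {y}).toReal = (ν (Set.Iic y)).toReal - (ν (Set.Iio y)).toReal := by
  have hsplit : ν (Set.Iic y) = ν (Set.Iio y) + ν {y} := by
    rw [← Set.Iio_union_right, measure_union (by simp) (measurableSet_singleton y)]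
  rw [hsplit, ENNReal.toReal_add (measure_ne_top _ _) (measure_ne_top _ _)]
  ring

lemma measurable_toReal_singleton_real (ν : Measure ℝ) [IsFiniteMeasure ν] :
    Measurable fun y => (ν {y}).toReal := by
  simp_rw [toReal_singleton_eq ν]
  exact ((mcdf_mono ν).measurable).sub (measurable_toReal_Iio ν)

lemma measurable_toReal_singleton {E : Type*} [MeasurableSpace E] (ν : Measure E) [SFinite ν]
    (hdiag : MeasurableSet (Set.diagonal E)) : Measurable fun x => (ν {x}).toReal := by
  have h : ∀ x : E, Prod.mk x ⁻¹' Set.diagonal E = {x} := by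
    intro x; ext z
    simp only [Set.mem_preimage, Set.mem_diagonal_iff, Set.mem_singleton_iff]
    exact eq_comm
  have hm := measurable_measure_prodMk_left (ν := ν) hdiag
  simp_rw [h] at hm
  exact hm.ennreal_toReal

lemma relEffect_map_eq (F : ℝ → ℝ) (hF : Measurable F) (B : Set ℝ)
    (ν₁ ν₂ : Measure ℝ) [IsProbabilityMeasure ν₁] [IsProbabilityMeasure ν₂]
    (h₁ : ν₁ B = 0) (h₂ : ν₂ B = 0) (hBm : MeasurableSet B)
    (hIio : ∀ y ∉ B, F ⁻¹' (Set.Iio (F y)) = Set.Iio y)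
    (hsing : ∀ y ∉ B, F ⁻¹' {F y} ⊆ {y} ∪ B) :
    relEffect (ν₁.map F) (ν₂.map F) = relEffect ν₁ ν₂ := by
  haveI : IsProbabilityMeasure (ν₁.map F) := Measure.isProbabilityMeasure_map hF.aemeasurable
  unfold relEffect
  have hmeas : AEStronglyMeasurable
      (fun y' => ((ν₁.map F) (Set.Iio y')).toReal + (1 / 2) * ((ν₁.map F) {y'}).toReal)
      (ν₂.map F) := by
    refine Measurable.aestronglyMeasurable ?_
    exact (measurable_toReal_Iio (ν₁.map F)).add
      ((measurable_toReal_singleton_real (ν₁.map F)).const_mul _)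
  rw [integral_map hF.aemeasurable hmeas]
  refine integral_congr_ae ?_
  have hae : ∀ᵐ y ∂ν₂, y ∉ B := by
    rw [ae_iff]
    exact measure_mono_null (fun y hy => not_not.1 hy) h₂
  filter_upwards [hae] with y hy
  have h1 : (ν₁.map F) (Set.Iio (F y)) = ν₁ (Set.Iio y) := by
    rw [Measure.map_apply hF measurableSet_Iio, hIio y hy]
  have h2 : (ν₁.map F) {F y} = ν₁ {y} := by
    rw [Measure.map_apply hF (measurableSet_singleton _)]
    refine le_antisymm ?_ (measure_mono (by intro z hz; simpa using congrArg F hz))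
    calc ν₁ (F ⁻¹' {F y}) ≤ ν₁ ({y} ∪ B) := measure_mono (hsing y hy)
      _ ≤ ν₁ {y} + ν₁ B := measure_union_le _ _
      _ = ν₁ {y} := by rw [h₁, add_zero]
  rw [h1, h2]

lemma ae_pair {α β : Type*} [MeasurableSpace α] [MeasurableSpace β]
    (μ : Measure α) (ν : Measure β) [SFinite μ] [SFinite ν]
    {p : α → Prop} {q : β → Prop} (hp : ∀ᵐ x ∂μ, p x) (hq : ∀ᵐ y ∂ν, q y) :
    ∀ᵐ z : α × β ∂μ.prod ν, p z.1 ∧ q z.2 := by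
  obtain ⟨Np, hNp_sup, hNp_meas, hNp0⟩ := exists_measurable_superset_of_null (ae_iff.1 hp)
  obtain ⟨Nq, hNq_sup, hNq_meas, hNq0⟩ := exists_measurable_superset_of_null (ae_iff.1 hq)
  rw [ae_iff]
  refine measure_mono_null (t := (Np ×ˢ (Set.univ : Set β)) ∪ ((Set.univ : Set α) ×ˢ Nq))
    (fun z hz => ?_) ?_
  · simp only [Set.mem_setOf_eq, not_and_or] at hz
    rcases hz with h1 | h2
    · exact Or.inl ⟨hNp_sup h1, Set.mem_univ _⟩
    · exact Or.inr ⟨Set.mem_univ _, hNq_sup h2⟩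
  · refine measure_union_null ?_ ?_
    · rw [Measure.prod_prod, hNp0, zero_mul]
    · rw [Measure.prod_prod, hNq0, mul_zero]

lemma measurable_relEffect_pair {E : Type*} [MeasurableSpace E] (κ : Kernel E ℝ)
    [IsMarkovKernel κ] :
    StronglyMeasurable fun q : E × E => relEffect (κ q.1) (κ q.2) := by
  have hIio : Measurable fun r : (E × E) × ℝ => (κ r.1.1 (Set.Iio r.2)).toReal := by
    set κ₃ : Kernel ((E × E) × ℝ) ℝ :=
      Kernel.comap κ (fun r => r.1.1) (measurable_fst.fst) with hκ₃
    have ht : MeasurableSet {p : (((E × E) × ℝ) × ℝ) | p.2 < p.1.2} :=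
      measurableSet_lt measurable_snd measurable_fst.snd
    have := Kernel.measurable_kernel_prodMk_left (κ := κ₃) ht
    exact this.ennreal_toReal
  have hsing : Measurable fun r : (E × E) × ℝ => (κ r.1.1 {r.2}).toReal := by
    set κ₃ : Kernel ((E × E) × ℝ) ℝ :=
      Kernel.comap κ (fun r => r.1.1) (measurable_fst.fst) with hκ₃
    have ht : MeasurableSet {p : (((E × E) × ℝ) × ℝ) | p.2 = p.1.2} :=
      measurableSet_eq_fun measurable_snd measurable_fst.snd
    have := Kernel.measurable_kernel_prodMk_left (κ := κ₃) ht
    exact this.ennreal_toReal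
  have hf : StronglyMeasurable fun r : (E × E) × ℝ =>
      (κ r.1.1 (Set.Iio r.2)).toReal + (1 / 2) * (κ r.1.1 {r.2}).toReal :=
    (hIio.add (hsing.const_mul _)).stronglyMeasurable
  have := hf.integral_kernel_prod_right' (κ := Kernel.comap κ Prod.snd measurable_snd)
  exact this

theorem sepCoeff_comp {Ω E : Type*} [MeasurableSpace Ω] [MeasurableSpace E]
    [StandardBorelSpace E] [Nonempty E]
    (P : Measure Ω) [IsProbabilityMeasure P]
    (X : Ω → E) (Y : Ω → ℝ) (hX : Measurable X) (hY : Measurable Y)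
    (G : E → E) (hG : Measurable G) (F : ℝ → ℝ) (hF : Measurable F)
    (hdiag : MeasurableSet (Set.diagonal E))
    (A : Set E) (hA : MeasurableSet A) (hAfull : P.map X Aᶜ = 0) (hGinj : Set.InjOn G A)
    (B : Set ℝ) (hB : MeasurableSet B) (hBnull : P.map Y B = 0)
    (hIio : ∀ y ∉ B, F ⁻¹' (Set.Iio (F y)) = Set.Iio y)
    (hsing : ∀ y ∉ B, F ⁻¹' {F y} ⊆ {y} ∪ B) :
    sepCoeff P Y X = sepCoeff P (fun ω => F (Y ω)) (fun ω => G (X ω)) := by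
  haveI : IsProbabilityMeasure (P.map X) := Measure.isProbabilityMeasure_map hX.aemeasurable
  haveI : IsProbabilityMeasure (P.map fun ω => (X ω, Y ω)) :=
    Measure.isProbabilityMeasure_map (hX.prodMk hY).aemeasurable
  haveI : IsProbabilityMeasure (P.map fun ω => G (X ω)) :=
    Measure.isProbabilityMeasure_map (hG.comp hX).aemeasurable
  set μ : Measure E := P.map X with hμdef
  set κ : Kernel E ℝ := condDistrib Y X P with hκdef
  have hμ' : P.map (fun ω => G (X ω)) = μ.map G := (Measure.map_map hG hX).symm
  -- measurable left inverse of `G` on `A`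
  haveI := hA.standardBorel
  have hHex : ∃ H : E → E, Measurable H ∧ ∀ x ∈ A, H (G x) = x := by
    have he : Measurable (fun a : A => G (a : E)) := hG.comp measurable_subtype_coe
    have heinj : Function.Injective (fun a : A => G (a : E)) := fun a b hab =>
      Subtype.ext (hGinj a.2 b.2 hab)
    obtain ⟨H, hH, hHe⟩ := (he.measurableEmbedding heinj).exists_measurable_extend
      measurable_subtype_coe (fun _ => ⟨Classical.arbitrary E⟩)
    exact ⟨H, hH, fun x hx => congrFun hHe ⟨x, hx⟩⟩
  obtain ⟨H, hH, hHG⟩ := hHex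
  set η : Kernel E ℝ := Kernel.map (Kernel.comap κ H hH) F with hηdef
  haveI : IsMarkovKernel η := Kernel.IsMarkovKernel.map _ hF
  -- disintegration of the law of (X, Y)
  have hdisint : μ ⊗ₘ κ = P.map (fun ω => (X ω, Y ω)) := by
    rw [hκdef, hμdef, condDistrib_def, ← Measure.fst_map_prodMk (X := X) hY]
    exact Measure.disintegrate _ _
  have hAae : ∀ᵐ x ∂μ, x ∈ A := by
    rw [ae_iff]
    exact measure_mono_null (fun x hx => hx) hAfull
  -- a.e. x, the conditional law puts no mass on B
  have hκB : ∀ᵐ x ∂μ, κ x B = 0 := by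
    have hint : ∫⁻ x, κ x B ∂μ = 0 := by
      have h1 : (μ ⊗ₘ κ) (Set.univ ×ˢ B) = ∫⁻ x, κ x B ∂μ := by
        rw [Measure.compProd_apply (MeasurableSet.univ.prod hB)]
        refine lintegral_congr fun x => ?_
        congr 1
        ext y
        simp
      rw [hdisint] at h1
      rw [← h1, Measure.map_apply (hX.prodMk hY) (MeasurableSet.univ.prod hB)]
      have : (fun ω => (X ω, Y ω)) ⁻¹' (Set.univ ×ˢ B) = Y ⁻¹' B := by
        ext ω; simp
      rw [this, ← Measure.map_apply hY hB, hBnull]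
    have h0 := (lintegral_eq_zero_iff (κ.measurable_coe hB)).1 hint
    filter_upwards [h0] with x hx using hx
  -- the transported disintegration
  have hcomp : P.map (fun ω => (G (X ω), F (Y ω))) = (P.map fun ω => G (X ω)) ⊗ₘ η := by
    ext s hs
    have hGF : Measurable (Prod.map G F) := hG.prodMap hF
    rw [Measure.map_apply (f := fun ω => (G (X ω), F (Y ω)))
      ((hG.comp hX).prodMk (hF.comp hY)) hs]
    have hL : (fun ω => (G (X ω), F (Y ω))) ⁻¹' s
        = (fun ω => (X ω, Y ω)) ⁻¹' (Prod.map G F ⁻¹' s) := rfl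
    rw [hL, ← Measure.map_apply (hX.prodMk hY) (hGF hs), ← hdisint,
      Measure.compProd_apply (hGF hs), Measure.compProd_apply hs, hμ',
      lintegral_map (Kernel.measurable_kernel_prodMk_left hs) hG]
    refine lintegral_congr_ae ?_
    filter_upwards [hAae] with x hx
    have hη : η (G x) = (κ x).map F := by
      rw [hηdef, Kernel.map_apply _ hF, Kernel.comap_apply, hHG x hx]
    rw [hη, Measure.map_apply hF (measurable_prodMk_left hs)]
    congr 1
  -- identification of the conditional distribution of (F ∘ Y) given (G ∘ X)
  have hkey : ∀ᵐ x ∂μ,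
      condDistrib (fun ω => F (Y ω)) (fun ω => G (X ω)) P (G x) = (κ x).map F := by
    have h0 := condDistrib_ae_eq_of_measure_eq_compProd_of_measurable (μ := P)
      (X := fun ω => G (X ω)) (Y := fun ω => F (Y ω))
      (hG.comp hX) (hF.comp hY) (κ := η) hcomp
    rw [hμ'] at h0
    have h1 := ae_of_ae_map hG.aemeasurable h0
    filter_upwards [h1, hAae] with x h hx
    rw [h, hηdef, Kernel.map_apply _ hF, Kernel.comap_apply, hHG x hx]
  -- invariance of alphaCoeff
  have halpha : alphaCoeff (P.map fun ω => G (X ω)) = alphaCoeff μ := by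
    unfold alphaCoeff
    rw [hμ']
    congr 1
    rw [integral_map hG.aemeasurable
      ((measurable_toReal_singleton (μ.map G) hdiag).aestronglyMeasurable)]
    refine integral_congr_ae ?_
    filter_upwards [hAae] with x hx
    congr 1
    rw [Measure.map_apply hG (measurableSet_singleton _)]
    refine le_antisymm ?_ (measure_mono (fun z hz => by simpa using congrArg G hz))
    have hsub : G ⁻¹' {G x} ⊆ {x} ∪ Aᶜ := by
      intro z hz
      by_cases hzA : z ∈ A
      · exact Or.inl (hGinj hzA hx (by simpa using hz))
      · exact Or.inr hzA
    calc μ (G ⁻¹' {G x}) ≤ μ ({x} ∪ Aᶜ) := measure_mono hsub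
      _ ≤ μ {x} + μ Aᶜ := measure_union_le _ _
      _ = μ {x} := by rw [hAfull, add_zero]
  -- invariance of the integral of squared relative-effect differences
  set κ' : Kernel E ℝ := condDistrib (fun ω => F (Y ω)) (fun ω => G (X ω)) P with hκ'def
  have hint : ∫ q : E × E,
      (relEffect (κ' q.1) (κ' q.2) - relEffect (κ' q.2) (κ' q.1)) ^ 2
        ∂((P.map fun ω => G (X ω)).prod (P.map fun ω => G (X ω)))
      = ∫ q : E × E,
      (relEffect (κ q.1) (κ q.2) - relEffect (κ q.2) (κ q.1)) ^ 2 ∂(μ.prod μ) := by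
    have hpm : StronglyMeasurable fun q : E × E => relEffect (κ' q.1) (κ' q.2) :=
      measurable_relEffect_pair κ'
    have hpm2 : StronglyMeasurable fun q : E × E => relEffect (κ' q.2) (κ' q.1) :=
      hpm.comp_measurable (measurable_snd.prodMk measurable_fst)
    have hf' : AEStronglyMeasurable
        (fun q : E × E => (relEffect (κ' q.1) (κ' q.2) - relEffect (κ' q.2) (κ' q.1)) ^ 2)
        (Measure.map (Prod.map G G) (μ.prod μ)) :=
      ((hpm.sub hpm2).pow 2).aestronglyMeasurable
    rw [hμ', Measure.map_prod_map _ _ hG hG,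
      integral_map (hG.prodMap hG).aemeasurable hf']
    refine integral_congr_ae ?_
    have hgood : ∀ᵐ z : E × E ∂μ.prod μ,
        (κ' (G z.1) = (κ z.1).map F ∧ κ z.1 B = 0)
          ∧ (κ' (G z.2) = (κ z.2).map F ∧ κ z.2 B = 0) :=
      ae_pair μ μ (hkey.and hκB) (hkey.and hκB)
    filter_upwards [hgood] with z hz
    obtain ⟨⟨h1, h1B⟩, ⟨h2, h2B⟩⟩ := hz
    have e1 : relEffect (κ' (Prod.map G G z).1) (κ' (Prod.map G G z).2)
        = relEffect (κ z.1) (κ z.2) := by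
      show relEffect (κ' (G z.1)) (κ' (G z.2)) = _
      rw [h1, h2]
      exact relEffect_map_eq F hF B _ _ h1B h2B hB hIio hsing
    have e2 : relEffect (κ' (Prod.map G G z).2) (κ' (Prod.map G G z).1)
        = relEffect (κ z.2) (κ z.1) := by
      show relEffect (κ' (G z.2)) (κ' (G z.1)) = _
      rw [h1, h2]
      exact relEffect_map_eq F hF B _ _ h2B h1B hB hIio hsing
    rw [e1, e2]
  simp only [sepCoeff]
  rw [halpha, hint]

lemma rvCdf_eq_mcdf {Ω : Type*} [MeasurableSpace Ω] (P : Measure Ω) {Z : Ω → ℝ}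
    (hZ : Measurable Z) : rvCdf P Z = mcdf (P.map Z) := by
  funext z
  unfold rvCdf mcdf
  rw [Measure.map_apply hZ measurableSet_Iic]
  rfl

end SepAux

open SepAux in
/-- Distributional invariance:
`Λ(Y|X) = Λ(F_Y(Y) | (F_{X₁}(X₁), …, F_{X_p}(X_p)))`. -/
theorem sepCoeff_distributional_invariance
    {Ω : Type*} [MeasurableSpace Ω] {p : ℕ} (hp : 1 ≤ p)
    (P : Measure Ω) [IsProbabilityMeasure P]
    (X : Ω → (Fin p → ℝ)) (Y : Ω → ℝ)
    (hX : Measurable X) (hY : Measurable Y)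
    (hXnd : ∃ k, Nondegenerate P fun ω => X ω k)
    (hYnd : Nondegenerate P Y) :
    sepCoeff P Y X
      = sepCoeff P (fun ω => rvCdf P Y (Y ω))
          (fun ω (i : Fin p) => rvCdf P (fun ω' => X ω' i) (X ω i)) := by
  haveI : IsProbabilityMeasure (P.map Y) := Measure.isProbabilityMeasure_map hY.aemeasurable
  set ν : Fin p → Measure ℝ := fun i => P.map (fun ω => X ω i) with hνdef
  haveI : ∀ i, IsProbabilityMeasure (ν i) := fun i =>
    Measure.isProbabilityMeasure_map ((measurable_pi_apply i).comp hX).aemeasurable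
  set F : ℝ → ℝ := mcdf (P.map Y) with hFdef
  set G : (Fin p → ℝ) → (Fin p → ℝ) := fun x i => mcdf (ν i) (x i) with hGdef
  have hYfun : (fun ω => rvCdf P Y (Y ω)) = fun ω => F (Y ω) := by
    funext ω
    rw [hFdef, rvCdf_eq_mcdf P hY]
  have hXfun : (fun ω (i : Fin p) => rvCdf P (fun ω' => X ω' i) (X ω i))
      = fun ω => G (X ω) := by
    funext ω i
    show rvCdf P (fun ω' => X ω' i) (X ω i) = mcdf (ν i) (X ω i)
    rw [rvCdf_eq_mcdf (Z := fun ω' => X ω' i) P ((measurable_pi_apply i).comp hX)]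
  rw [hYfun, hXfun]
  have hGm : Measurable G :=
    measurable_pi_lambda _ fun i => (mcdf_measurable (ν i)).comp (measurable_pi_apply i)
  have hFm : Measurable F := mcdf_measurable (P.map Y)
  have hdiag : MeasurableSet (Set.diagonal (Fin p → ℝ)) :=
    measurableSet_eq_fun measurable_fst measurable_snd
  set A : Set (Fin p → ℝ) := ⋂ i, (fun x : Fin p → ℝ => x i) ⁻¹' (badSet (ν i))ᶜ with hAdef
  have hAmem : ∀ {x : Fin p → ℝ}, x ∈ A ↔ ∀ i, x i ∉ badSet (ν i) := by
    intro x
    simp [hAdef]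
  have hAm : MeasurableSet A :=
    MeasurableSet.iInter fun i => (measurable_pi_apply i) (badSet_measurableSet (ν i)).compl
  have hAfull : P.map X Aᶜ = 0 := by
    rw [hAdef, Set.compl_iInter]
    refine measure_iUnion_null fun i => ?_
    have h1 : ((fun x : Fin p → ℝ => x i) ⁻¹' (badSet (ν i))ᶜ)ᶜ
        = (fun x : Fin p → ℝ => x i) ⁻¹' badSet (ν i) := by
      rw [← Set.preimage_compl, compl_compl]
    rw [h1, ← Measure.map_apply (measurable_pi_apply i) (badSet_measurableSet (ν i)),
      Measure.map_map (measurable_pi_apply i) hX]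
    exact badSet_null (ν i)
  have hGinj : Set.InjOn G A := by
    intro x hx y hy hxy
    funext i
    exact mcdf_inj (hAmem.1 hx i) (hAmem.1 hy i) (congrFun hxy i)
  exact sepCoeff_comp P X Y hX hY G hGm F hFm hdiag A hAm hAfull hGinj
    (badSet (P.map Y)) (badSet_measurableSet _) (badSet_null _)
    (fun y hy => mcdf_preimage_Iio hy) (fun y hy => mcdf_preimage_singleton_subset hy)
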